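/- In a Lie algebra over a field of characteristic p > 2 satisfying the identities [x,y,[u,v],z]=0, [x,z,u^(p),v]=0, and [x,y,x^(p-1),y^(p-1),v]=0, for each positive integer k the identity [y,z_1,...,z_{2k},y^(p)] = 0 holds (left-normalized, y^(p) means y repeated p times). -/

import Mathlib

/-- Left-normalized Lie bracket: `lnb x [a₁,…,aₙ] = [[…[x,a₁],…],aₙ]`. -/
def lnb {L : Type*} [LieRing L] (x : L) (l : List L) : L :=
  l.foldl (fun a b => ⁅a, b⁆) x


namespace S10

section LieRingOnly
variable {L : Type*} [LieRing L]

lemma lnb_nil (x : L) : lnb x [] = x := rfl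
lemma lnb_cons (x a : L) (l : List L) : lnb x (a :: l) = lnb ⁅x, a⁆ l := rfl
lemma lnb_append (x : L) (l1 l2 : List L) : lnb x (l1 ++ l2) = lnb (lnb x l1) l2 :=
  List.foldl_append
lemma lnb_concat (x a : L) (l : List L) : lnb x (l ++ [a]) = ⁅lnb x l, a⁆ := by
  rw [lnb_append]; rfl
lemma lnb_zero (l : List L) : lnb (0 : L) l = 0 := by
  induction l with
  | nil => rfl
  | cons a l ih => rw [lnb_cons, zero_lie]; exact ih
lemma lnb_add (c d : L) (l : List L) : lnb (c + d) l = lnb c l + lnb d l := by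
  induction l generalizing c d with
  | nil => rfl
  | cons a l ih => rw [lnb_cons, add_lie, ih]; rfl

/-- strongly central -/
def SC (c : L) : Prop := ∀ t : L, ⁅c, t⁆ = 0
lemma SC.zero : SC (0 : L) := fun t => zero_lie t
lemma SC.neg {c : L} (h : SC c) : SC (-c) := fun t => by rw [neg_lie, h, neg_zero]
lemma SC.add {c d : L} (hc : SC c) (hd : SC d) : SC (c + d) := fun t => by
  rw [add_lie, hc, hd, add_zero]
lemma SC.lie_right {c : L} (h : SC c) (t : L) : ⁅t, c⁆ = 0 := by
  rw [← lie_skew, h, neg_zero]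
lemma SC.congr {c d : L} (h : SC c) (he : c = d) : SC d := he ▸ h

/-- bracket-with-anything of a strongly central start vanishes along any lnb chain -/
lemma SC.lnb_lie {c : L} (h : SC c) (l : List L) (v : L) : ⁅lnb c l, v⁆ = 0 := by
  cases l with
  | nil => exact h v
  | cons a l => rw [lnb_cons, h a, lnb_zero, zero_lie]

def IsBr (w : L) : Prop := ∃ a b : L, w = ⁅a, b⁆
lemma isBr_lie (a b : L) : IsBr ⁅a, b⁆ := ⟨a, b, rfl⟩
lemma IsBr.lnb {c : L} (h : IsBr c) (l : List L) : IsBr (lnb c l) := by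
  induction l generalizing c with
  | nil => exact h
  | cons a l ih => exact ih (isBr_lie _ _)

/-- Jacobi variant: `[[P,a],b] = [[P,b],a] + [P,[a,b]]` -/
lemma jac1 (P a b : L) : ⁅⁅P, a⁆, b⁆ = ⁅⁅P, b⁆, a⁆ + ⁅P, ⁅a, b⁆⁆ := by
  have h := leibniz_lie P a b
  have h2 : ⁅a, ⁅P, b⁆⁆ = -⁅⁅P, b⁆, a⁆ := by rw [← lie_skew]
  rw [h2] at h
  rw [h]; abel

end LieRingOnly

section Field
variable {F : Type} [Field F] {p : ℕ} {L : Type} [LieRing L] [LieAlgebra F L]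

lemma natsmul_zero_of_dvd [CharP F p] {c : ℕ} (h : p ∣ c) (x : L) : c • x = 0 := by
  rw [← Nat.cast_smul_eq_nsmul F c x, (CharP.cast_eq_zero_iff F p c).mpr h, zero_smul]

/-- In an `F`-algebra killed by `p`, `(L_α - R_α)^p = L_{α^p} - R_{α^p}` pointwise. -/
lemma lr_pow {R : Type} [Ring R] [Algebra F R] (hchar : ∀ x : R, p • x = 0)
    (hp : p.Prime) (hodd : Odd p) (α β : R) :
    ((LinearMap.mulLeft F α - LinearMap.mulRight F α) ^ p) β = α ^ p * β - β * α ^ p := by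
  have hc : Commute (LinearMap.mulLeft F α) (-(LinearMap.mulRight F α)) :=
    (LinearMap.commute_mulLeft_right (R := F) α α).neg_right
  have hs : LinearMap.mulLeft F α - LinearMap.mulRight F α
      = LinearMap.mulLeft F α + -(LinearMap.mulRight F α) := by rw [sub_eq_add_neg]
  rw [hs, hc.add_pow p, LinearMap.sum_apply]
  have hmid : ∀ m ∈ Finset.range p, m ≠ 0 →
      ((LinearMap.mulLeft F α) ^ m * (-(LinearMap.mulRight F α)) ^ (p - m)
        * ((p.choose m : ℕ) : Module.End F R)) β = 0 := by
    intro m hm hm0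
    have hdvd : p ∣ p.choose m := hp.dvd_choose_self hm0 (Finset.mem_range.mp hm)
    have hcast : (((p.choose m : ℕ) : Module.End F R)) β = 0 := by
      rw [Module.End.natCast_apply]
      obtain ⟨c, hc'⟩ := hdvd
      rw [hc', mul_comm, mul_nsmul]
      rw [hchar (c • β)]
    rw [Module.End.mul_apply, Module.End.mul_apply, hcast, map_zero, map_zero]
  rw [Finset.sum_range_succ, Finset.sum_eq_single_of_mem 0 (Finset.mem_range.mpr hp.pos)
    (fun m hm hm0 => hmid m hm hm0)]
  have h0 : ((LinearMap.mulLeft F α) ^ 0 * (-(LinearMap.mulRight F α)) ^ (p - 0)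
      * ((p.choose 0 : ℕ) : Module.End F R)) β = -(β * α ^ p) := by
    simp only [pow_zero, one_mul, Nat.choose_zero_right, Nat.cast_one, mul_one, Nat.sub_zero]
    have hnp : (-(LinearMap.mulRight F α) : Module.End F R) ^ p = -((LinearMap.mulRight F α) ^ p) :=
      hodd.neg_pow (α := Module.End F R) _
    rw [hnp, LinearMap.pow_mulRight, LinearMap.neg_apply, LinearMap.mulRight_apply]
  have hpterm : ((LinearMap.mulLeft F α) ^ p * (-(LinearMap.mulRight F α)) ^ (p - p)
      * ((p.choose p : ℕ) : Module.End F R)) β = α ^ p * β := by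
    simp only [Nat.sub_self, pow_zero, mul_one, Nat.choose_self, Nat.cast_one]
    rw [LinearMap.pow_mulLeft, LinearMap.mulLeft_apply]
  rw [h0, hpterm]; abel

attribute [local instance 100] LieRing.ofAssociativeRing in
/-- characteristic-p Leibniz rule for the p-th power of ad -/
lemma leibniz_p [CharP F p] (hp : p.Prime) (hodd : Odd p) (y a b : L) :
    ((LieAlgebra.ad F L y) ^ p) ⁅a, b⁆
      = ⁅((LieAlgebra.ad F L y) ^ p) a, b⁆ + ⁅a, ((LieAlgebra.ad F L y) ^ p) b⁆ := by
  have hchar : ∀ x : Module.End F L, p • x = 0 := by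
    intro x; ext v
    simp only [LinearMap.smul_apply, LinearMap.zero_apply]
    exact natsmul_zero_of_dvd (F := F) dvd_rfl (x v)
  have key := lr_pow (F := F) hchar hp hodd (LieAlgebra.ad F L y)
  have hTc : ∀ c : L, (LinearMap.mulLeft F (LieAlgebra.ad F L y)
      - LinearMap.mulRight F (LieAlgebra.ad F L y)) (LieAlgebra.ad F L c)
      = LieAlgebra.ad F L ((LieAlgebra.ad F L y) c) := by
    intro c
    have h1 : LieAlgebra.ad F L ⁅y, c⁆ = ⁅LieAlgebra.ad F L y, LieAlgebra.ad F L c⁆ :=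
      (LieAlgebra.ad F L).map_lie y c
    rw [LieAlgebra.ad_apply, h1, Ring.lie_def]
    simp only [LinearMap.sub_apply, LinearMap.mulLeft_apply, LinearMap.mulRight_apply]
  have step1 : ∀ (n : ℕ) (c : L),
      ((LinearMap.mulLeft F (LieAlgebra.ad F L y)
        - LinearMap.mulRight F (LieAlgebra.ad F L y)) ^ n) (LieAlgebra.ad F L c)
      = LieAlgebra.ad F L (((LieAlgebra.ad F L y) ^ n) c) := by
    intro n
    induction n with
    | zero => intro c; simp
    | succ n ih =>
      intro c
      rw [pow_succ, Module.End.mul_apply, hTc c, ih ((LieAlgebra.ad F L y) c),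
        ← Module.End.mul_apply, ← pow_succ]
  have h3 := step1 p a
  rw [key (LieAlgebra.ad F L a)] at h3
  have h4 := congrArg (fun f : Module.End F L => f b) h3
  simp only [LinearMap.sub_apply, Module.End.mul_apply, LieAlgebra.ad_apply] at h4
  rw [← h4]; abel

lemma ad_pow_succ_out (y x : L) (n : ℕ) :
    ((LieAlgebra.ad F L y) ^ (n + 1)) x = ⁅y, ((LieAlgebra.ad F L y) ^ n) x⁆ := by
  rw [pow_succ', Module.End.mul_apply, LieAlgebra.ad_apply]

lemma ad_pow_succ_in (y x : L) (n : ℕ) :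
    ((LieAlgebra.ad F L y) ^ (n + 1)) x = ((LieAlgebra.ad F L y) ^ n) ⁅y, x⁆ := by
  rw [pow_succ, Module.End.mul_apply, LieAlgebra.ad_apply]

lemma isBr_adp (hp1 : 1 ≤ p) (y u : L) : IsBr (((LieAlgebra.ad F L y) ^ p) u) := by
  obtain ⟨n, rfl⟩ : ∃ n, p = n + 1 := ⟨p - 1, by omega⟩
  exact ⟨y, ((LieAlgebra.ad F L y) ^ n) u, ad_pow_succ_out y u n⟩

end Field
end S10

namespace S10
section Part2
variable {F : Type} [Field F] {p : ℕ} {L : Type} [LieRing L] [LieAlgebra F L]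

lemma lnb_replicate (u x : L) (n : ℕ) :
    lnb x (List.replicate n u) = ((-(LieAlgebra.ad F L u)) ^ n) x := by
  induction n generalizing x with
  | zero => simp [lnb_nil]
  | succ n ih =>
    rw [List.replicate_succ, lnb_cons, ih ⁅x, u⁆, pow_succ, Module.End.mul_apply]
    congr 1
    rw [LinearMap.neg_apply, LieAlgebra.ad_apply, ← lie_skew]

/-- reformulation of the second identity -/
lemma hcpE (hodd : Odd p)
    (hcp : ∀ x z u v : L, lnb ⁅x, z⁆ (List.replicate p u ++ [v]) = 0)
    (u a b v : L) : ⁅((LieAlgebra.ad F L u) ^ p) ⁅a, b⁆, v⁆ = 0 := by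
  have h := hcp a b u v
  rw [lnb_concat, lnb_replicate (F := F), hodd.neg_pow, LinearMap.neg_apply, neg_lie,
    neg_eq_zero] at h
  exact h

variable (hcm : ∀ x y u v z : L, ⁅⁅⁅x, y⁆, ⁅u, v⁆⁆, z⁆ = 0)
variable (hcpe : ∀ u a b v : L, ⁅((LieAlgebra.ad F L u) ^ p) ⁅a, b⁆, v⁆ = 0)

include hcm in
lemma SC_brbr {u w : L} (hu : IsBr u) (hw : IsBr w) : SC ⁅u, w⁆ := by
  obtain ⟨a, b, rfl⟩ := hu
  obtain ⟨c, d, rfl⟩ := hw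
  exact fun t => hcm a b c d t

include hcpe in
lemma SC_adp_br (u : L) {c : L} (hc : IsBr c) : SC (((LieAlgebra.ad F L u) ^ p) c) := by
  obtain ⟨a, b, rfl⟩ := hc
  exact fun t => hcpe u a b t

include hcpe in
/-- `[ lnb ((ad u)^p [a,b]) l , v ] = 0` -/
lemma hcp_kill (u : L) {c : L} (hc : IsBr c) (l : List L) (v : L) :
    ⁅lnb (((LieAlgebra.ad F L u) ^ p) c) l, v⁆ = 0 :=
  (SC_adp_br hcpe u hc).lnb_lie l v

include hcm in
/-- the error term in commuting `ad y` with an lnb chain is strongly central -/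
lemma scdelta (y c : L) (t : List L) :
    SC (⁅y, lnb ⁅y, c⁆ t⁆ - lnb ⁅y, ⁅y, c⁆⁆ t) := by
  induction t using List.reverseRecOn with
  | nil => rw [lnb_nil, lnb_nil, sub_self]; exact SC.zero
  | append_singleton t a ih =>
    rw [lnb_concat, lnb_concat]
    have hl := leibniz_lie y (lnb ⁅y, c⁆ t) a
    have heq : ⁅y, ⁅lnb ⁅y, c⁆ t, a⁆⁆ - ⁅lnb ⁅y, ⁅y, c⁆⁆ t, a⁆
        = ⁅⁅y, lnb ⁅y, c⁆ t⁆ - lnb ⁅y, ⁅y, c⁆⁆ t, a⁆ + ⁅lnb ⁅y, c⁆ t, ⁅y, a⁆⁆ := by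
      rw [hl, sub_lie]; abel
    rw [heq, ih]
    have hsc : SC ⁅lnb ⁅y, c⁆ t, ⁅y, a⁆⁆ :=
      SC_brbr hcm ((isBr_lie y c).lnb t) (isBr_lie y a)
    exact (SC.zero.add hsc).congr (by rw [zero_add])

include hcm in
lemma dstep (y : L) {i : ℕ} (hi : 1 ≤ i) (c : L) (ss : List L) :
    ((LieAlgebra.ad F L y) ^ (i + 1)) (lnb ⁅y, c⁆ ss)
      = ((LieAlgebra.ad F L y) ^ i) (lnb ⁅y, ⁅y, c⁆⁆ ss) := by
  rw [pow_succ, Module.End.mul_apply, LieAlgebra.ad_apply]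
  have hd : ⁅y, lnb ⁅y, c⁆ ss⁆
      = lnb ⁅y, ⁅y, c⁆⁆ ss + (⁅y, lnb ⁅y, c⁆ ss⁆ - lnb ⁅y, ⁅y, c⁆⁆ ss) := by abel
  rw [hd, map_add]
  obtain ⟨j, rfl⟩ : ∃ j, i = j + 1 := ⟨i - 1, by omega⟩
  have hz : ((LieAlgebra.ad F L y) ^ (j + 1)) (⁅y, lnb ⁅y, c⁆ ss⁆ - lnb ⁅y, ⁅y, c⁆⁆ ss)
      = 0 := by
    rw [pow_succ, Module.End.mul_apply, LieAlgebra.ad_apply]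
    have h0 : ⁅y, ⁅y, lnb ⁅y, c⁆ ss⁆ - lnb ⁅y, ⁅y, c⁆⁆ ss⁆ = 0 := by
      rw [← lie_skew, scdelta hcm y c ss y, neg_zero]
    rw [h0, map_zero]
  rw [hz, add_zero]

include hcm in
lemma bredAux (y : L) (m : ℕ) (hm : m + 1 ≤ p) (u : L) (ss : List L) :
    ((LieAlgebra.ad F L y) ^ (p - m)) (lnb (((LieAlgebra.ad F L y) ^ (m + 1)) u) ss)
      = ((LieAlgebra.ad F L y) ^ p) (lnb (((LieAlgebra.ad F L y) ^ 1) u) ss) := by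
  induction m with
  | zero => rw [Nat.sub_zero]
  | succ m ih =>
    have ihm := ih (by omega)
    rw [show p - m = (p - (m + 1)) + 1 from by omega, ad_pow_succ_out y u m] at ihm
    rw [dstep hcm y (i := p - (m+1)) (by omega) (((LieAlgebra.ad F L y) ^ m) u) ss] at ihm
    rw [← ihm]
    congr 2
    rw [ad_pow_succ_out y u (m+1), ad_pow_succ_out y u m]

include hcm in
/-- Step B: `[lnb ((ad y)^p u) ss, y] = -(ad y)^p (lnb [y,u] ss)` -/
lemma bred (hp1 : 1 ≤ p) (y u : L) (ss : List L) :
    ⁅lnb (((LieAlgebra.ad F L y) ^ p) u) ss, y⁆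
      = -(((LieAlgebra.ad F L y) ^ p) (lnb ⁅y, u⁆ ss)) := by
  have hm1 : (p - 1) + 1 ≤ p := by omega
  have h := bredAux (F := F) hcm y (p - 1) hm1 u ss
  rw [show p - 1 + 1 = p from by omega, show p - (p - 1) = 1 from by omega] at h
  rw [← lie_skew]
  have h1 : ⁅y, lnb (((LieAlgebra.ad F L y) ^ p) u) ss⁆
      = ((LieAlgebra.ad F L y) ^ 1) (lnb (((LieAlgebra.ad F L y) ^ p) u) ss) := by
    rw [pow_one, LieAlgebra.ad_apply]
  rw [h1, h, pow_one, LieAlgebra.ad_apply]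

end Part2
end S10

namespace S10
section Part3
variable {F : Type} [Field F] {p : ℕ} {L : Type} [LieRing L] [LieAlgebra F L]
variable (hcm : ∀ x y u v z : L, ⁅⁅⁅x, y⁆, ⁅u, v⁆⁆, z⁆ = 0)
variable (hcpe : ∀ u a b v : L, ⁅((LieAlgebra.ad F L u) ^ p) ⁅a, b⁆, v⁆ = 0)

include hcpe in
lemma SC_adp_y (y b : L) : SC ⁅((LieAlgebra.ad F L y) ^ p) b, y⁆ := by
  have heq : ⁅((LieAlgebra.ad F L y) ^ p) b, y⁆
      = -(((LieAlgebra.ad F L y) ^ p) ⁅y, b⁆) := by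
    rw [← lie_skew, ← ad_pow_succ_out (F := F) y b p, ad_pow_succ_in (F := F) y b p]
  rw [heq]
  exact (SC_adp_br hcpe y (isBr_lie y b)).neg

include hcm hcpe in
lemma swapTail (hp1 : 1 ≤ p) (y u a b : L) (pre post : List L) :
    ⁅lnb (((LieAlgebra.ad F L y) ^ p) u) (pre ++ a :: b :: post), y⁆
      = ⁅lnb (((LieAlgebra.ad F L y) ^ p) u) (pre ++ b :: a :: post), y⁆ := by
  rw [lnb_append, lnb_append, lnb_cons, lnb_cons, lnb_cons, lnb_cons]
  rw [jac1 (lnb (((LieAlgebra.ad F L y) ^ p) u) pre) a b, lnb_add, add_lie]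
  have hsc : SC ⁅lnb (((LieAlgebra.ad F L y) ^ p) u) pre, ⁅a, b⁆⁆ :=
    SC_brbr hcm ((isBr_adp hp1 y u).lnb pre) (isBr_lie a b)
  rw [hsc.lnb_lie post y, add_zero]

include hcm hcpe in
lemma swapHead [CharP F p] (hp : p.Prime) (hodd : Odd p) (y a b : L) (post : List L) :
    ⁅lnb (((LieAlgebra.ad F L y) ^ p) a) (b :: post), y⁆
      = ⁅lnb (((LieAlgebra.ad F L y) ^ p) b) (a :: post), y⁆ := by
  rw [lnb_cons, lnb_cons]
  have hl := leibniz_p (F := F) hp hodd y a b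
  have h2 : ⁅a, ((LieAlgebra.ad F L y) ^ p) b⁆ = -⁅((LieAlgebra.ad F L y) ^ p) b, a⁆ := by
    rw [← lie_skew]
  have key : ⁅((LieAlgebra.ad F L y) ^ p) a, b⁆
      = ((LieAlgebra.ad F L y) ^ p) ⁅a, b⁆ + ⁅((LieAlgebra.ad F L y) ^ p) b, a⁆ := by
    rw [hl, h2]; abel
  rw [key, lnb_add, add_lie, hcp_kill hcpe y (isBr_lie a b) post y, zero_add]

include hcm hcpe in
lemma permInv (hp1 : 1 ≤ p) (y u : L) {l1 l2 : List L} (hperm : l1.Perm l2) :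
    ∀ pre : List L,
      ⁅lnb (((LieAlgebra.ad F L y) ^ p) u) (pre ++ l1), y⁆
        = ⁅lnb (((LieAlgebra.ad F L y) ^ p) u) (pre ++ l2), y⁆ := by
  induction hperm with
  | nil => intro pre; rfl
  | cons x h ih =>
    intro pre
    have h1 := ih (pre ++ [x])
    simpa [List.append_assoc] using h1
  | swap x x' l => intro pre; exact swapTail hcm hcpe hp1 y u x' x pre l
  | trans h1 h2 ih1 ih2 => intro pre; rw [ih1 pre, ih2 pre]

include hcm in
lemma lemU (y u : L) (t : List L) : ∀ (w : L), IsBr w →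
    (Even t.length → ⁅w, lnb ⁅y, u⁆ t⁆ = ⁅lnb w t.reverse, ⁅y, u⁆⁆) ∧
    (Odd t.length → ⁅w, lnb ⁅y, u⁆ t⁆ = -⁅lnb w t.reverse, ⁅y, u⁆⁆) := by
  induction t using List.reverseRecOn with
  | nil =>
    intro w hw
    refine ⟨fun _ => by rw [lnb_nil, List.reverse_nil, lnb_nil], fun hodd => ?_⟩
    simp [Nat.odd_iff] at hodd
  | append_singleton t a ih =>
    intro w hw
    have key : ⁅w, lnb ⁅y, u⁆ (t ++ [a])⁆ = -⁅⁅w, a⁆, lnb ⁅y, u⁆ t⁆ := by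
      rw [lnb_concat, leibniz_lie w (lnb ⁅y, u⁆ t) a,
        (SC_brbr hcm hw ((isBr_lie y u).lnb t)) a, zero_add, ← lie_skew]
    have hrev : lnb ⁅w, a⁆ t.reverse = lnb w ((t ++ [a]).reverse) := by
      rw [List.reverse_append]; rfl
    have hlen : (t ++ [a]).length = t.length + 1 := by simp
    constructor
    · intro hev
      have hodd' : Odd t.length := by
        rw [hlen, Nat.even_iff] at hev; rw [Nat.odd_iff]; omega
      rw [key, (ih ⁅w, a⁆ (isBr_lie w a)).2 hodd', neg_neg, hrev]
    · intro hodd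
      have hev' : Even t.length := by
        rw [hlen, Nat.odd_iff] at hodd; rw [Nat.even_iff]; omega
      rw [key, (ih ⁅w, a⁆ (isBr_lie w a)).1 hev', hrev]

include hcm hcpe in
/-- core of the odd-length case, given the even-length SC property one level down -/
lemma boddCore [CharP F p] (hp : p.Prime) (hp2 : 2 < p) (hodd : Odd p) (y : L)
    (n : ℕ) (hEv : Even n)
    (hBe : ∀ (b : L) (e : List L), e.length = n →
      SC ⁅lnb (((LieAlgebra.ad F L y) ^ p) b) e, y⁆)
    (u : L) (ss : List L) (hlen : ss.length = n + 1) :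
    ⁅lnb (((LieAlgebra.ad F L y) ^ p) u) ss, y⁆ = 0 := by
  have hp1 : 1 ≤ p := hp.pos
  rcases List.eq_nil_or_concat ss with h | ⟨ss', b, rfl⟩
  · subst h; simp at hlen
  rw [List.concat_eq_append] at hlen ⊢
  have hlen' : ss'.length = n := by
    simp only [List.length_append, List.length_cons, List.length_nil] at hlen
    omega
  have perm1 : (ss' ++ [b]).Perm (b :: ss') := List.perm_append_singleton b ss'
  have perm2 : (u :: ss').Perm (ss'.reverse ++ [u]) :=
    (ss'.reverse_perm.symm.cons u).trans (List.perm_append_singleton u ss'.reverse).symm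
  have hsym : ⁅lnb (((LieAlgebra.ad F L y) ^ p) u) (ss' ++ [b]), y⁆
      = ⁅lnb (((LieAlgebra.ad F L y) ^ p) b) (ss'.reverse ++ [u]), y⁆ := by
    have s1 := permInv hcm hcpe hp1 y u perm1 []
    simp only [List.nil_append] at s1
    have s2 := swapHead hcm hcpe hp hodd y u b ss'
    have s3 := permInv hcm hcpe hp1 y b perm2 []
    simp only [List.nil_append] at s3
    rw [s1, s2, s3]
  have hflip : ⁅lnb (((LieAlgebra.ad F L y) ^ p) u) (ss' ++ [b]), y⁆
      = -⁅lnb (((LieAlgebra.ad F L y) ^ p) b) (ss'.reverse ++ [u]), y⁆ := by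
    rw [bred hcm hp1 y u (ss' ++ [b]), lnb_concat,
      leibniz_p (F := F) hp hodd y (lnb ⁅y, u⁆ ss') b]
    have hz : ⁅((LieAlgebra.ad F L y) ^ p) (lnb ⁅y, u⁆ ss'), b⁆ = 0 := by
      obtain ⟨α, β, he⟩ := (isBr_lie y u).lnb ss'
      rw [he]; exact hcpe y α β b
    rw [hz, zero_add]
    have hW : ⁅((LieAlgebra.ad F L y) ^ p) b, lnb ⁅y, u⁆ ss'⁆
        = -⁅lnb (((LieAlgebra.ad F L y) ^ p) b) (ss'.reverse ++ [u]), y⁆ := by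
      have hEv' : Even ss'.length := hlen' ▸ hEv
      rw [(lemU hcm y u ss' (((LieAlgebra.ad F L y) ^ p) b) (isBr_adp hp1 y b)).1 hEv']
      rw [leibniz_lie (lnb (((LieAlgebra.ad F L y) ^ p) b) ss'.reverse) y u]
      have h1 : ⁅⁅lnb (((LieAlgebra.ad F L y) ^ p) b) ss'.reverse, y⁆, u⁆ = 0 :=
        hBe b ss'.reverse (by simp [hlen']) u
      rw [h1, zero_add, lnb_concat, lie_skew]
    have hc0 : ⁅lnb ⁅y, u⁆ ss', ((LieAlgebra.ad F L y) ^ p) b⁆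
        = ⁅lnb (((LieAlgebra.ad F L y) ^ p) b) (ss'.reverse ++ [u]), y⁆ :=
      calc ⁅lnb ⁅y, u⁆ ss', ((LieAlgebra.ad F L y) ^ p) b⁆
          = -⁅((LieAlgebra.ad F L y) ^ p) b, lnb ⁅y, u⁆ ss'⁆ := (lie_skew _ _).symm
        _ = -(-⁅lnb (((LieAlgebra.ad F L y) ^ p) b) (ss'.reverse ++ [u]), y⁆) := by rw [hW]
        _ = _ := neg_neg _
    rw [hc0]
  have hTT : ⁅lnb (((LieAlgebra.ad F L y) ^ p) b) (ss'.reverse ++ [u]), y⁆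
      = -⁅lnb (((LieAlgebra.ad F L y) ^ p) b) (ss'.reverse ++ [u]), y⁆ :=
    hsym.symm.trans hflip
  have h2ne : (2 : F) ≠ 0 := by
    intro h20
    have hdvd := (CharP.cast_eq_zero_iff F p 2).mp h20
    have := Nat.le_of_dvd (by norm_num) hdvd
    omega
  have hTT0 : ⁅lnb (((LieAlgebra.ad F L y) ^ p) b) (ss'.reverse ++ [u]), y⁆
      + ⁅lnb (((LieAlgebra.ad F L y) ^ p) b) (ss'.reverse ++ [u]), y⁆ = 0 :=
    (congrArg (· + ⁅lnb (((LieAlgebra.ad F L y) ^ p) b) (ss'.reverse ++ [u]), y⁆) hTT).trans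
      (neg_add_cancel _)
  have hT0 : ⁅lnb (((LieAlgebra.ad F L y) ^ p) b) (ss'.reverse ++ [u]), y⁆ = 0 := by
    have h2s : (2 : F) • ⁅lnb (((LieAlgebra.ad F L y) ^ p) b) (ss'.reverse ++ [u]), y⁆ = 0 := by
      rw [two_smul]; exact hTT0
    calc ⁅lnb (((LieAlgebra.ad F L y) ^ p) b) (ss'.reverse ++ [u]), y⁆
        = (2 : F)⁻¹ • ((2 : F) • ⁅lnb (((LieAlgebra.ad F L y) ^ p) b) (ss'.reverse ++ [u]), y⁆) :=
          (inv_smul_smul₀ h2ne _).symm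
      _ = 0 := by rw [h2s, smul_zero]
  rw [hsym]; exact hT0

end Part3
end S10

namespace S10
section Part4
set_option linter.unusedSectionVars false
variable {F : Type} [Field F] {p : ℕ} {L : Type} [LieRing L] [LieAlgebra F L]
variable (hcm : ∀ x y u v z : L, ⁅⁅⁅x, y⁆, ⁅u, v⁆⁆, z⁆ = 0)
variable (hcpe : ∀ u a b v : L, ⁅((LieAlgebra.ad F L u) ^ p) ⁅a, b⁆, v⁆ = 0)

include hcm hcpe in
lemma bodd [CharP F p] (hp : p.Prime) (hp2 : 2 < p) (hodd : Odd p) (y : L) :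
    ∀ (k : ℕ) (u : L) (ss : List L), ss.length = 2 * k + 1 →
      ⁅lnb (((LieAlgebra.ad F L y) ^ p) u) ss, y⁆ = 0 := by
  intro k
  induction k with
  | zero =>
    intro u ss hlen
    refine boddCore hcm hcpe hp hp2 hodd y 0 Even.zero ?_ u ss (by omega)
    intro b e he
    have : e = [] := List.length_eq_zero_iff.mp he
    subst this
    rw [lnb_nil]
    exact SC_adp_y hcpe y b
  | succ m ih =>
    intro u ss hlen
    refine boddCore hcm hcpe hp hp2 hodd y (2 * m + 2) ⟨m + 1, by ring⟩ ?_ u ss (by omega)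
    intro b e he
    rcases List.eq_nil_or_concat e with h | ⟨e', b', rfl⟩
    · subst h; simp at he
    rw [List.concat_eq_append] at he ⊢
    have he' : e'.length = 2 * m + 1 := by
      simp only [List.length_append, List.length_cons, List.length_nil] at he; omega
    rw [lnb_concat]
    have hQ0 : ⁅lnb (((LieAlgebra.ad F L y) ^ p) b) e', y⁆ = 0 := ih b e' he'
    have heq : ⁅⁅lnb (((LieAlgebra.ad F L y) ^ p) b) e', b'⁆, y⁆
        = ⁅lnb (((LieAlgebra.ad F L y) ^ p) b) e', ⁅b', y⁆⁆ := by
      rw [jac1, hQ0, zero_lie, zero_add]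
    rw [heq]
    exact SC_brbr hcm ((isBr_adp hp.pos y b).lnb e') (isBr_lie b' y)

include hcm hcpe in
lemma bevenAll [CharP F p] (hp : p.Prime) (hp2 : 2 < p) (hodd : Odd p) (y : L)
    (b : L) (e : List L) (hEv : Even e.length) :
    SC ⁅lnb (((LieAlgebra.ad F L y) ^ p) b) e, y⁆ := by
  rcases List.eq_nil_or_concat e with h | ⟨e', b', rfl⟩
  · subst h; rw [lnb_nil]; exact SC_adp_y hcpe y b
  rw [List.concat_eq_append] at hEv ⊢
  have hOdd' : Odd e'.length := by
    simp only [List.length_append, List.length_cons, List.length_nil] at hEv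
    rw [Nat.even_iff] at hEv; rw [Nat.odd_iff]; omega
  obtain ⟨m, hm⟩ := hOdd'
  rw [lnb_concat]
  have hQ0 : ⁅lnb (((LieAlgebra.ad F L y) ^ p) b) e', y⁆ = 0 :=
    bodd hcm hcpe hp hp2 hodd y m b e' (by omega)
  have heq : ⁅⁅lnb (((LieAlgebra.ad F L y) ^ p) b) e', b'⁆, y⁆
      = ⁅lnb (((LieAlgebra.ad F L y) ^ p) b) e', ⁅b', y⁆⁆ := by
    rw [jac1, hQ0, zero_lie, zero_add]
  rw [heq]
  exact SC_brbr hcm ((isBr_adp hp.pos y b).lnb e') (isBr_lie b' y)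

include hcm hcpe in
lemma rlem [CharP F p] (hp : p.Prime) (hp2 : 2 < p) (hodd : Odd p) (y : L) (zs : List L) :
    ∀ (u : L) (ss : List L),
      (Odd (ss.length + zs.length) → ⁅lnb (((LieAlgebra.ad F L y) ^ p) u) ss, lnb y zs⁆ = 0)
      ∧ (Even (ss.length + zs.length) → SC ⁅lnb (((LieAlgebra.ad F L y) ^ p) u) ss, lnb y zs⁆) := by
  induction zs using List.reverseRecOn with
  | nil =>
    intro u ss
    constructor
    · intro hOdd
      obtain ⟨m, hm⟩ := hOdd
      simp only [List.length_nil, Nat.add_zero] at hm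
      rw [lnb_nil]
      exact bodd hcm hcpe hp hp2 hodd y m u ss (by omega)
    · intro hEv
      simp only [List.length_nil, Nat.add_zero] at hEv
      rw [lnb_nil]
      exact bevenAll hcm hcpe hp hp2 hodd y u ss hEv
  | append_singleton zs a ih =>
    intro u ss
    have key : ⁅lnb (((LieAlgebra.ad F L y) ^ p) u) ss, lnb y (zs ++ [a])⁆
        = ⁅⁅lnb (((LieAlgebra.ad F L y) ^ p) u) ss, lnb y zs⁆, a⁆
          + -⁅lnb (((LieAlgebra.ad F L y) ^ p) u) (ss ++ [a]), lnb y zs⁆ := by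
      rw [lnb_concat, leibniz_lie (lnb (((LieAlgebra.ad F L y) ^ p) u) ss) (lnb y zs) a]
      congr 1
      rw [← lie_skew, lnb_concat]
    have hlen : (zs ++ [a]).length = zs.length + 1 := by simp
    have hlen2 : (ss ++ [a]).length = ss.length + 1 := by simp
    constructor
    · intro hOdd
      rw [key]
      have hEvPrev : Even (ss.length + zs.length) := by
        rw [hlen, Nat.odd_iff] at hOdd; rw [Nat.even_iff]; omega
      have hOddNext : Odd ((ss ++ [a]).length + zs.length) := by
        rw [hlen, Nat.odd_iff] at hOdd; rw [hlen2, Nat.odd_iff]; omega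
      rw [((ih u ss).2 hEvPrev) a, ((ih u (ss ++ [a])).1 hOddNext), neg_zero, add_zero]
    · intro hEv
      rw [key]
      have hOddPrev : Odd (ss.length + zs.length) := by
        rw [hlen, Nat.even_iff] at hEv; rw [Nat.odd_iff]; omega
      have hEvNext : Even ((ss ++ [a]).length + zs.length) := by
        rw [hlen, Nat.even_iff] at hEv; rw [hlen2, Nat.even_iff]; omega
      rw [(ih u ss).1 hOddPrev, zero_lie]
      exact SC.zero.add ((ih u (ss ++ [a])).2 hEvNext).neg

include hcm hcpe in
lemma clmain [CharP F p] (hp : p.Prime) (hp2 : 2 < p) (hodd : Odd p) (y : L) (zs : List L) :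
    (2 ≤ zs.length → Even zs.length → ((LieAlgebra.ad F L y) ^ p) (lnb y zs) = 0)
    ∧ (Odd zs.length → SC (((LieAlgebra.ad F L y) ^ p) (lnb y zs))) := by
  induction zs using List.reverseRecOn with
  | nil =>
    constructor
    · intro h2 _; simp at h2
    · intro h; simp [Nat.odd_iff] at h
  | append_singleton zs a ih =>
    have key : ((LieAlgebra.ad F L y) ^ p) (lnb y (zs ++ [a]))
        = ⁅((LieAlgebra.ad F L y) ^ p) (lnb y zs), a⁆ + ⁅lnb y zs, ((LieAlgebra.ad F L y) ^ p) a⁆ := by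
      rw [lnb_concat, leibniz_p (F := F) hp hodd y (lnb y zs) a]
    have hlen : (zs ++ [a]).length = zs.length + 1 := by simp
    have hsecond : ⁅lnb y zs, ((LieAlgebra.ad F L y) ^ p) a⁆
        = -⁅lnb (((LieAlgebra.ad F L y) ^ p) a) [], lnb y zs⁆ := by
      rw [lnb_nil, ← lie_skew]
    constructor
    · intro h2 hEv
      have hOddzs : Odd zs.length := by
        rw [hlen, Nat.even_iff] at hEv; rw [Nat.odd_iff]; omega
      have hOddR : Odd (([] : List L).length + zs.length) := by
        simpa using hOddzs
      rw [key, (ih.2 hOddzs) a, hsecond, (rlem hcm hcpe hp hp2 hodd y zs a []).1 hOddR,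
        neg_zero, add_zero]
    · intro hOdd
      rcases List.eq_nil_or_concat zs with h | ⟨zs', a', rfl⟩
      · subst h
        have : lnb y ([] ++ [a]) = ⁅y, a⁆ := rfl
        rw [this]
        exact SC_adp_br hcpe y (isBr_lie y a)
      simp only [List.concat_eq_append] at ih key hsecond hOdd hlen ⊢
      have hEvzs : Even (zs' ++ [a']).length := by
        rw [hlen, Nat.odd_iff] at hOdd; rw [Nat.even_iff]; omega
      have h2zs : 2 ≤ (zs' ++ [a']).length := by
        have hm := Nat.even_iff.mp hEvzs
        simp only [List.length_append, List.length_cons, List.length_nil] at hm ⊢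
        omega
      have hEvR : Even (([] : List L).length + (zs' ++ [a']).length) := by simpa using hEvzs
      rw [key, ih.1 h2zs hEvzs, zero_lie, hsecond]
      exact SC.zero.add ((rlem hcm hcpe hp hp2 hodd y (zs' ++ [a']) a []).2 hEvR).neg

end Part4
end S10


/-- In a Lie algebra over a field of characteristic `p > 2` satisfying
`[x,y,[u,v],z] = 0`, `[x,z,u^(p),v] = 0` and `[x,y,x^(p-1),y^(p-1),v] = 0`,
for each `k ≥ 1` the identity `[y,z₁,…,z_{2k},y^(p)] = 0` holds. -/
theorem stmt10 (F : Type) [Field F] (p : ℕ) (hp : 2 < p) [CharP F p]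
    (L : Type) [LieRing L] [LieAlgebra F L]
    (hcm : ∀ x y u v z : L, ⁅⁅⁅x, y⁆, ⁅u, v⁆⁆, z⁆ = 0)
    (hcp : ∀ x z u v : L, lnb ⁅x, z⁆ (List.replicate p u ++ [v]) = 0)
    (hpp : ∀ x y v : L,
      lnb ⁅x, y⁆ (List.replicate (p - 1) x ++ List.replicate (p - 1) y ++ [v]) = 0)
    (k : ℕ) (hk : 1 ≤ k) (y : L) (z : ℕ → L) :
    lnb y ((List.ofFn fun i : Fin (2 * k) => z i) ++ List.replicate p y) = 0 := by

  have hprime : p.Prime := by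
    rcases CharP.char_is_prime_or_zero F p with h | h
    · exact h
    · omega
  have hodd : Odd p := hprime.odd_of_ne_two (by omega)
  have hcpe := S10.hcpE (F := F) hodd hcp
  set zsl : List L := List.ofFn fun i : Fin (2 * k) => z i with hzsl
  have hlen : zsl.length = 2 * k := by rw [hzsl, List.length_ofFn]
  rw [S10.lnb_append, S10.lnb_replicate (F := F), hodd.neg_pow, LinearMap.neg_apply]
  rw [(S10.clmain hcm hcpe hprime hp hodd y zsl).1 (by omega) ⟨k, by omega⟩]
  exact neg_zero
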